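/- For a bounded linear operator T on a Hilbert space with polar decomposition T = U|T| (U an isometry) and any λ ∈ (0,1), the approximate point spectrum of T equals that of its λ-Aluthge transform: σ_ap(T) = σ_ap(Δ_λ(T)). -/

import Mathlib

set_option synthInstance.maxHeartbeats 1000000
set_option maxHeartbeats 1000000

/-- The approximate point spectrum of a bounded operator: `μ` such that there exist
unit vectors `x n` with `‖(T - μ) x n‖ → 0`. -/
def approxPointSpectrum {H : Type*} [NormedAddCommGroup H] [InnerProductSpace ℂ H]
    [CompleteSpace H] (T : H →L[ℂ] H) : Set ℂ :=
  {μ | ∃ x : ℕ → H, (∀ n, ‖x n‖ = 1) ∧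
    Filter.Tendsto (fun n => ‖T (x n) - μ • x n‖) Filter.atTop (nhds 0)}

section Aux

open ContinuousLinearMap Filter
open scoped NNReal

variable {H : Type*} [NormedAddCommGroup H] [InnerProductSpace ℂ H] [CompleteSpace H]

private lemma cont_rpow (s : ℝ) (hs : 0 < s) : Continuous (fun t : ℝ => t ^ s) :=
  continuous_iff_continuousAt.mpr fun x => Real.continuousAt_rpow_const x s (Or.inr hs.le)

private lemma rpow_eq_real_cfc (R : H →L[ℂ] H) (hR : 0 ≤ R) {s : ℝ} (hs : 0 < s) :
    CFC.rpow R s = cfc (fun t : ℝ => t ^ s) R := by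
  rw [show CFC.rpow R s = cfc (fun x : ℝ≥0 => x ^ s) R from rfl, cfc_nnreal_eq_real _ _ hR]
  apply cfc_congr
  intro t ht
  have h0 : 0 ≤ t := spectrum_nonneg_of_nonneg hR ht
  simp only [NNReal.coe_rpow, Real.coe_toNNReal t h0]

private lemma rpow_mul_rpow (R : H →L[ℂ] H) (hR : 0 ≤ R) {s t : ℝ} (hs : 0 < s) (ht : 0 < t) :
    CFC.rpow R s * CFC.rpow R t = CFC.rpow R (s + t) := by
  have hsa : IsSelfAdjoint R := .of_nonneg hR
  rw [rpow_eq_real_cfc R hR hs, rpow_eq_real_cfc R hR ht, rpow_eq_real_cfc R hR (by positivity),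
    ← cfc_mul _ _ R (cont_rpow s hs).continuousOn (cont_rpow t ht).continuousOn]
  apply cfc_congr
  intro z hz
  have h0 : 0 ≤ z := spectrum_nonneg_of_nonneg hR hz
  exact (Real.rpow_add' h0 (by positivity)).symm

private lemma pairing_mono {S S' : H →L[ℂ] H} (h : S ≤ S') (x : H) :
    RCLike.re (inner ℂ (S x) x : ℂ) ≤ RCLike.re (inner ℂ (S' x) x : ℂ) := by
  have h2 : 0 ≤ RCLike.re (inner ℂ ((S' - S) x) x : ℂ) :=
    ((le_def S S').mp h).re_inner_nonneg_left x
  rw [sub_apply, inner_sub_left, map_sub] at h2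
  linarith

private lemma norm_sq_pairing (S : H →L[ℂ] H) (hS : IsSelfAdjoint S) (x : H) :
    ‖S x‖ ^ 2 = RCLike.re (inner ℂ ((S * S) x) x : ℂ) := by
  rw [mul_apply_eq_comp, ← adjoint_inner_right, hS.adjoint_eq, inner_self_eq_norm_sq]

private lemma algebraMap_pairing (r : ℝ) (x : H) :
    RCLike.re (inner ℂ ((algebraMap ℝ (H →L[ℂ] H) r) x) x : ℂ) = r * ‖x‖ ^ 2 := by
  have : (algebraMap ℝ (H →L[ℂ] H) r) x = (r : ℂ) • x := by
    simp [Algebra.algebraMap_eq_smul_one]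
  rw [this, inner_smul_left]
  simp [RCLike.conj_ofReal, RCLike.re_ofReal_mul, inner_self_eq_norm_sq]
  exact Or.inl (by norm_cast)

private lemma aps_swap (X Y : H →L[ℂ] H) {μ : ℂ} (hμ : μ ≠ 0)
    (h : μ ∈ approxPointSpectrum (X * Y)) : μ ∈ approxPointSpectrum (Y * X) := by
  classical
  obtain ⟨x, hx1, hx2⟩ := h
  have hμpos : (0 : ℝ) < ‖μ‖ := norm_pos_iff.mpr hμ
  set r : ℝ := ‖μ‖ / (2 * (‖X‖ + 1)) with hr
  have hrpos : 0 < r := by positivity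
  have hev : ∀ᶠ n in atTop, r ≤ ‖Y (x n)‖ := by
    filter_upwards [hx2.eventually (gt_mem_nhds (half_pos hμpos))] with n hn
    have h1 : ‖μ • x n‖ = ‖μ‖ := by rw [norm_smul, hx1 n, mul_one]
    have h2 : ‖μ • x n‖ ≤ ‖(X * Y) (x n)‖ + ‖(X * Y) (x n) - μ • x n‖ := by
      have := norm_sub_le ((X * Y) (x n)) ((X * Y) (x n) - μ • x n)
      simpa using this
    have h3 : ‖(X * Y) (x n)‖ ≤ ‖X‖ * ‖Y (x n)‖ := by
      rw [mul_apply_eq_comp]; exact le_opNorm X _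
    have hXnn : (0 : ℝ) ≤ ‖X‖ := norm_nonneg _
    have hYnn : (0 : ℝ) ≤ ‖Y (x n)‖ := norm_nonneg _
    rw [hr, div_le_iff₀ (by positivity)]
    nlinarith
  set z : ℕ → H := fun n => if Y (x n) = 0 then x 0 else ((‖Y (x n)‖ : ℂ))⁻¹ • Y (x n) with hz
  refine ⟨z, fun n => ?_, ?_⟩
  · by_cases h0 : Y (x n) = 0
    · simp [hz, h0, hx1 0]
    · have hn0 : ‖Y (x n)‖ ≠ 0 := norm_ne_zero_iff.mpr h0
      simp only [hz, if_neg h0, norm_smul, norm_inv, Complex.norm_real, Real.norm_eq_abs,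
        abs_of_nonneg (norm_nonneg _)]
      field_simp
  · have key : ∀ᶠ n in atTop,
        ‖(Y * X) (z n) - μ • z n‖ ≤ r⁻¹ * (‖Y‖ * ‖(X * Y) (x n) - μ • x n‖) := by
      filter_upwards [hev] with n hn
      have h0 : Y (x n) ≠ 0 := by
        intro h; rw [h, norm_zero] at hn; linarith
      have hn0 : ‖Y (x n)‖ ≠ 0 := norm_ne_zero_iff.mpr h0
      have hzn : z n = ((‖Y (x n)‖ : ℂ))⁻¹ • Y (x n) := by simp [hz, h0]
      have hYX : (Y * X) (Y (x n)) - μ • (Y (x n)) = Y ((X * Y) (x n) - μ • x n) := by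
        simp [mul_apply_eq_comp, map_sub]
      have e1 : (Y * X) (z n) - μ • z n
          = ((‖Y (x n)‖ : ℂ))⁻¹ • ((Y * X) (Y (x n)) - μ • Y (x n)) := by
        rw [hzn, map_smul, smul_sub, smul_comm]
      calc ‖(Y * X) (z n) - μ • z n‖
          = ‖Y (x n)‖⁻¹ * ‖(Y * X) (Y (x n)) - μ • Y (x n)‖ := by
            rw [e1, norm_smul, norm_inv, Complex.norm_real, Real.norm_eq_abs,
              abs_of_nonneg (norm_nonneg _)]
        _ ≤ r⁻¹ * (‖Y‖ * ‖(X * Y) (x n) - μ • x n‖) := by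
            rw [hYX]
            have hb : ‖Y ((X * Y) (x n) - μ • x n)‖ ≤ ‖Y‖ * ‖(X * Y) (x n) - μ • x n‖ :=
              le_opNorm Y _
            have hinv : ‖Y (x n)‖⁻¹ ≤ r⁻¹ := by
              apply inv_anti₀ hrpos hn
            exact mul_le_mul hinv hb (norm_nonneg _) (by positivity)
    have hlim : Tendsto (fun n => r⁻¹ * (‖Y‖ * ‖(X * Y) (x n) - μ • x n‖)) atTop (nhds 0) := by
      have h := hx2.const_mul (r⁻¹ * ‖Y‖)
      simpa [mul_assoc] using h
    exact squeeze_zero' (Eventually.of_forall fun n => norm_nonneg _) key hlim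

private lemma zero_fwd (T U R : H →L[ℂ] H) {l : ℝ} (hl : l ∈ Set.Ioo (0:ℝ) 1)
    (hR : 0 ≤ R) (hT : T = U * R) (hU : ∀ x : H, ‖U x‖ = ‖x‖)
    (h : (0 : ℂ) ∈ approxPointSpectrum T) :
    (0 : ℂ) ∈ approxPointSpectrum (CFC.rpow R l * U * CFC.rpow R (1 - l)) := by
  obtain ⟨x, hx1, hx2⟩ := h
  haveI : Nontrivial H := nontrivial_of_ne (x 0) 0
    (by intro h0; have h1 := hx1 0; rw [h0, norm_zero] at h1; norm_num at h1)
  have hsa : IsSelfAdjoint R := .of_nonneg hR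
  have hRx : Tendsto (fun n => ‖R (x n)‖) atTop (nhds 0) := by
    refine hx2.congr fun n => ?_
    rw [zero_smul, sub_zero, hT, mul_apply_eq_comp, hU]
  have h1l : 0 < 1 - l := by linarith [hl.2]
  set s : ℝ := 2 * (1 - l) with hsdef
  have hs : 0 < s := by positivity
  have key : ∀ ε : ℝ, 0 < ε → ∀ n : ℕ,
      ‖CFC.rpow R (1 - l) (x n)‖ ^ 2
        ≤ ε ^ s + (ε ^ (s - 1) + (‖R‖ + 1) ^ (s - 1)) * ‖R (x n)‖ := by
    intro ε hε n
    set C : ℝ := ε ^ (s - 1) + (‖R‖ + 1) ^ (s - 1) with hCdef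
    have hCpos : 0 < C := by positivity
    have hRle : ∀ t ∈ spectrum ℝ R, 0 ≤ t ∧ t ≤ ‖R‖ + 1 := by
      intro t ht
      refine ⟨spectrum_nonneg_of_nonneg hR ht, ?_⟩
      have h2 := spectrum.norm_le_norm_of_mem ht
      rw [Real.norm_eq_abs] at h2
      linarith [le_abs_self t]
    have hop : CFC.rpow R s ≤ algebraMap ℝ (H →L[ℂ] H) (ε ^ s) + C • R := by
      have h2 : algebraMap ℝ (H →L[ℂ] H) (ε ^ s) + C • R
          = cfc (fun t : ℝ => ε ^ s + C * t) R := by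
        rw [cfc_add R _ _ (by fun_prop) (by fun_prop), cfc_const _ _ hsa,
          cfc_const_mul _ _ R (by fun_prop), cfc_id' ℝ R]
      rw [rpow_eq_real_cfc R hR hs, h2]
      refine cfc_mono (fun t ht => ?_) (cont_rpow s hs).continuousOn (by fun_prop)
      obtain ⟨ht0, htM⟩ := hRle t ht
      by_cases hle : t ≤ ε
      · have h3 : t ^ s ≤ ε ^ s := Real.rpow_le_rpow ht0 hle hs.le
        nlinarith [mul_nonneg hCpos.le ht0]
      · push_neg at hle
        have ht0' : 0 < t := hε.trans hle
        have e1 : t ^ s = t ^ (s - 1) * t := by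
          have h4 := Real.rpow_add_one (ne_of_gt ht0') (s - 1)
          simpa using h4
        have e2 : t ^ (s - 1) ≤ C := by
          rcases le_or_gt s 1 with h1 | h1
          · have h4 : t ^ (s - 1) ≤ ε ^ (s - 1) :=
              Real.rpow_le_rpow_of_nonpos hε hle.le (by linarith)
            have h5 : (0:ℝ) ≤ (‖R‖ + 1) ^ (s - 1) := by positivity
            rw [hCdef]; linarith
          · have h4 : t ^ (s - 1) ≤ (‖R‖ + 1) ^ (s - 1) :=
              Real.rpow_le_rpow ht0 htM (by linarith)
            have h5 : (0:ℝ) ≤ ε ^ (s - 1) := by positivity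
            rw [hCdef]; linarith
        have h6 : (0:ℝ) ≤ ε ^ s := by positivity
        nlinarith [mul_le_mul_of_nonneg_right e2 ht0]
    have hmul : CFC.rpow R (1 - l) * CFC.rpow R (1 - l) = CFC.rpow R s := by
      rw [rpow_mul_rpow R hR h1l h1l]
      congr 1
      rw [hsdef]; ring
    have hsub : IsSelfAdjoint (CFC.rpow R (1 - l)) := .of_nonneg CFC.rpow_nonneg
    have hsq : ‖CFC.rpow R (1 - l) (x n)‖ ^ 2
        = RCLike.re (inner ℂ ((CFC.rpow R s) (x n)) (x n) : ℂ) := by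
      rw [norm_sq_pairing _ hsub, hmul]
    have hp := pairing_mono hop (x n)
    have hsmul : (C • R) (x n) = (RCLike.ofReal C : ℂ) • R (x n) := by
      rw [smul_apply, RCLike.real_smul_eq_coe_smul (K := ℂ)]
    have hrhs : RCLike.re (inner ℂ ((algebraMap ℝ (H →L[ℂ] H) (ε ^ s) + C • R) (x n)) (x n) : ℂ)
        = ε ^ s * ‖x n‖ ^ 2 + C * RCLike.re (inner ℂ (R (x n)) (x n) : ℂ) := by
      rw [add_apply, inner_add_left, map_add, algebraMap_pairing, hsmul, inner_smul_left]
      simp [RCLike.conj_ofReal, RCLike.re_ofReal_mul]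
    have hCS : RCLike.re (inner ℂ (R (x n)) (x n) : ℂ) ≤ ‖R (x n)‖ := by
      have h7 : RCLike.re (inner ℂ (R (x n)) (x n) : ℂ) ≤ ‖(inner ℂ (R (x n)) (x n) : ℂ)‖ :=
        RCLike.re_le_norm _
      have h8 := norm_inner_le_norm (𝕜 := ℂ) (R (x n)) (x n)
      rw [hx1 n, mul_one] at h8
      linarith
    rw [hrhs, hx1 n] at hp
    rw [hsq]
    nlinarith [mul_le_mul_of_nonneg_left hCS hCpos.le]
  have ha : Tendsto (fun n => ‖CFC.rpow R (1 - l) (x n)‖) atTop (nhds 0) := by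
    rw [Metric.tendsto_atTop]
    intro δ hδ
    set ε : ℝ := (δ ^ 2 / 2) ^ s⁻¹ with hεdef
    have hεpos : 0 < ε := Real.rpow_pos_of_pos (by positivity) _
    have hεs : ε ^ s = δ ^ 2 / 2 := Real.rpow_inv_rpow (by positivity) (ne_of_gt hs)
    set C : ℝ := ε ^ (s - 1) + (‖R‖ + 1) ^ (s - 1) with hCdef
    have hCpos : 0 < C := by positivity
    have hev : ∀ᶠ n in atTop, ‖R (x n)‖ < δ ^ 2 / 2 / C :=
      hRx.eventually (gt_mem_nhds (by positivity))
    obtain ⟨N, hN⟩ := eventually_atTop.mp hev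
    refine ⟨N, fun n hn => ?_⟩
    have h10 := key ε hεpos n
    rw [hεs] at h10
    have h11 : C * ‖R (x n)‖ < δ ^ 2 / 2 := by
      calc C * ‖R (x n)‖ < C * (δ ^ 2 / 2 / C) := mul_lt_mul_of_pos_left (hN n hn) hCpos
        _ = δ ^ 2 / 2 := by field_simp
    have h12 : ‖CFC.rpow R (1 - l) (x n)‖ ^ 2 < δ ^ 2 := by nlinarith
    rw [Real.dist_eq, sub_zero, abs_of_nonneg (norm_nonneg _)]
    nlinarith [norm_nonneg (CFC.rpow R (1 - l) (x n))]
  refine ⟨x, hx1, ?_⟩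
  have hb : ∀ n, ‖(CFC.rpow R l * U * CFC.rpow R (1 - l)) (x n) - (0:ℂ) • x n‖
      ≤ ‖CFC.rpow R l‖ * ‖CFC.rpow R (1 - l) (x n)‖ := by
    intro n
    rw [zero_smul, sub_zero, mul_apply_eq_comp, mul_apply_eq_comp]
    calc ‖CFC.rpow R l (U (CFC.rpow R (1 - l) (x n)))‖
        ≤ ‖CFC.rpow R l‖ * ‖U (CFC.rpow R (1 - l) (x n))‖ := le_opNorm _ _
      _ = ‖CFC.rpow R l‖ * ‖CFC.rpow R (1 - l) (x n)‖ := by rw [hU]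
  refine squeeze_zero (fun n => norm_nonneg _) hb ?_
  simpa using ha.const_mul ‖CFC.rpow R l‖

private lemma zero_bwd (T U R : H →L[ℂ] H) {l : ℝ} (hl : l ∈ Set.Ioo (0:ℝ) 1)
    (hR : 0 ≤ R) (hT : T = U * R) (hU : ∀ x : H, ‖U x‖ = ‖x‖)
    (hT0 : (0 : ℂ) ∉ approxPointSpectrum T) :
    (0 : ℂ) ∉ approxPointSpectrum (CFC.rpow R l * U * CFC.rpow R (1 - l)) := by
  classical
  have hsa : IsSelfAdjoint R := .of_nonneg hR
  have hnorm : ∀ v : H, ‖T v‖ = ‖R v‖ := fun v => by rw [hT, mul_apply_eq_comp, hU]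
  have hc : ∃ c : ℝ, 0 < c ∧ ∀ v : H, ‖v‖ = 1 → c ≤ ‖T v‖ := by
    by_contra hcon
    push_neg at hcon
    have hcon' : ∀ n : ℕ, ∃ v : H, ‖v‖ = 1 ∧ ‖T v‖ < 1 / (n + 1 : ℝ) := by
      intro n
      obtain ⟨v, hv1, hv2⟩ := hcon (1 / (n + 1 : ℝ)) (by positivity)
      exact ⟨v, hv1, hv2⟩
    choose v hv1 hv2 using hcon'
    apply hT0
    refine ⟨v, hv1, ?_⟩
    refine squeeze_zero (fun n => norm_nonneg _) (fun n => ?_)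
      tendsto_one_div_add_atTop_nhds_zero_nat
    rw [zero_smul, sub_zero]
    exact (hv2 n).le
  obtain ⟨c, hcpos, hcb⟩ := hc
  have hcall : ∀ v : H, c * ‖v‖ ≤ ‖R v‖ := by
    intro v
    rcases eq_or_ne v 0 with rfl | hv
    · simp
    · have hvn : (0:ℝ) < ‖v‖ := norm_pos_iff.mpr hv
      have h1 : ‖((‖v‖ : ℂ))⁻¹ • v‖ = 1 := by
        rw [norm_smul, norm_inv, Complex.norm_real, Real.norm_eq_abs,
          abs_of_nonneg (norm_nonneg _)]
        field_simp
      have h2 := hcb _ h1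
      rw [hnorm, map_smul, norm_smul, norm_inv, Complex.norm_real, Real.norm_eq_abs,
        abs_of_nonneg (norm_nonneg _)] at h2
      calc c * ‖v‖ ≤ (‖v‖⁻¹ * ‖R v‖) * ‖v‖ := by nlinarith
        _ = ‖R v‖ := by field_simp
  have hop : algebraMap ℝ (H →L[ℂ] H) (c ^ 2) ≤ R * R := by
    refine (le_def _ _).mpr ⟨?_, fun v => ?_⟩
    · have hRR : IsSelfAdjoint (R * R) := by
        rw [IsSelfAdjoint, star_mul, hsa.star_eq]
      have hAM : IsSelfAdjoint (algebraMap ℝ (H →L[ℂ] H) (c ^ 2)) := by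
        rw [IsSelfAdjoint, Algebra.algebraMap_eq_smul_one, star_smul, star_one, star_trivial]
      exact (hRR.sub hAM).isSymmetric
    · rw [reApplyInnerSelf_apply, sub_apply, inner_sub_left, map_sub, algebraMap_pairing]
      have h3 : RCLike.re (inner ℂ ((R * R) v) v : ℂ) = ‖R v‖ ^ 2 := (norm_sq_pairing R hsa v).symm
      have h4 := hcall v
      nlinarith [mul_self_le_mul_self (by positivity : (0:ℝ) ≤ c * ‖v‖) h4, h3,
        norm_nonneg v, norm_nonneg (R v)]
  have hRRsa : IsSelfAdjoint (R * R) := by rw [IsSelfAdjoint, star_mul, hsa.star_eq]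
  have hspecRR : ∀ t ∈ spectrum ℝ (R * R), c ^ 2 ≤ t :=
    (algebraMap_le_iff_le_spectrum hRRsa).mp hop
  have hRRcfc : cfc (fun t : ℝ => t * t) R = R * R := by
    rw [cfc_mul _ _ R (by fun_prop) (by fun_prop), cfc_id' ℝ R]
  have hspecR : ∀ t ∈ spectrum ℝ R, c ≤ t := by
    intro t ht
    have h0 : 0 ≤ t := spectrum_nonneg_of_nonneg hR ht
    have hmem : t * t ∈ spectrum ℝ (R * R) := by
      rw [← hRRcfc, cfc_map_spectrum (f := fun t : ℝ => t * t) (a := R) hsa (by fun_prop)]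
      exact ⟨t, ht, rfl⟩
    have h2 := hspecRR _ hmem
    nlinarith
  have hlow : ∀ s : ℝ, 0 < s → ∀ v : H, c ^ s * ‖v‖ ≤ ‖CFC.rpow R s v‖ := by
    intro s hs v
    have hs2 : (0:ℝ) < 2 * s := by positivity
    have hmul : CFC.rpow R s * CFC.rpow R s = CFC.rpow R (2 * s) := by
      rw [rpow_mul_rpow R hR hs hs]; congr 1; ring
    have hsub : IsSelfAdjoint (CFC.rpow R s) := .of_nonneg CFC.rpow_nonneg
    have hsq : ‖CFC.rpow R s v‖ ^ 2 = RCLike.re (inner ℂ ((CFC.rpow R (2 * s)) v) v : ℂ) := by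
      rw [norm_sq_pairing _ hsub, hmul]
    have hopc : algebraMap ℝ (H →L[ℂ] H) (c ^ (2 * s)) ≤ CFC.rpow R (2 * s) := by
      rw [rpow_eq_real_cfc R hR hs2]
      rw [algebraMap_le_cfc_iff _ _ R (cont_rpow _ hs2).continuousOn hsa]
      intro t ht
      exact Real.rpow_le_rpow hcpos.le (hspecR t ht) hs2.le
    have hp := pairing_mono hopc v
    rw [algebraMap_pairing] at hp
    have hcs : (c ^ s) ^ 2 = c ^ (2 * s) := by
      rw [← Real.rpow_natCast (c ^ s) 2, ← Real.rpow_mul hcpos.le]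
      norm_num
      congr 1
      ring
    have h5 : (c ^ s * ‖v‖) ^ 2 ≤ ‖CFC.rpow R s v‖ ^ 2 := by
      calc (c ^ s * ‖v‖) ^ 2 = c ^ (2 * s) * ‖v‖ ^ 2 := by rw [mul_pow, hcs]
        _ ≤ _ := by rw [hsq]; exact hp
    exact le_of_pow_le_pow_left₀ two_ne_zero (norm_nonneg _) h5
  intro hmem
  obtain ⟨x, hx1, hx2⟩ := hmem
  have hge : ∀ n, c ≤ ‖(CFC.rpow R l * U * CFC.rpow R (1 - l)) (x n) - (0:ℂ) • x n‖ := by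
    intro n
    rw [zero_smul, sub_zero, mul_apply_eq_comp, mul_apply_eq_comp]
    have e0 : c = c ^ l * c ^ (1 - l) := by
      rw [← Real.rpow_add hcpos]
      norm_num
    have h7 := hlow (1 - l) (by linarith [hl.2]) (x n)
    rw [hx1 n, mul_one] at h7
    have h8 := hlow l hl.1 (U (CFC.rpow R (1 - l) (x n)))
    rw [hU] at h8
    have h9 : (0:ℝ) ≤ c ^ l := by positivity
    calc c = c ^ l * c ^ (1 - l) := e0
      _ ≤ c ^ l * ‖CFC.rpow R (1 - l) (x n)‖ := mul_le_mul_of_nonneg_left h7 h9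
      _ ≤ ‖CFC.rpow R l (U (CFC.rpow R (1 - l) (x n)))‖ := h8
  obtain ⟨n, hn⟩ := (hx2.eventually (gt_mem_nhds hcpos)).exists
  exact absurd (hge n) (not_le.mpr hn)

end Aux

open ContinuousLinearMap in
/-- For `T = U|T|` with `U` an isometry and `λ ∈ (0,1)`,
`σ_ap(T) = σ_ap(Δ_λ(T))`. -/
theorem approxPointSpectrum_lambda_aluthge {H : Type*} [NormedAddCommGroup H]
    [InnerProductSpace ℂ H] [CompleteSpace H] (T U R : H →L[ℂ] H) (l : ℝ)
    (hl : l ∈ Set.Ioo (0 : ℝ) 1)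
    (hR : 0 ≤ R) (hR2 : R * R = adjoint T * T) (hT : T = U * R)
    (hU : ∀ x : H, ‖U x‖ = ‖x‖) :
    approxPointSpectrum T =
      approxPointSpectrum (CFC.rpow R l * U * CFC.rpow R (1 - l)) := by
  ext μ
  by_cases hμ : μ = 0
  · subst hμ
    constructor
    · exact zero_fwd T U R hl hR hT hU
    · intro h
      by_contra hT0
      exact zero_bwd T U R hl hR hT hU hT0 h
  · have h1l : (0:ℝ) < 1 - l := by linarith [hl.2]
    have hmul1 : CFC.rpow R (1 - l) * CFC.rpow R l = R := by
      rw [rpow_mul_rpow R hR h1l hl.1, sub_add_cancel, CFC.rpow_eq_pow, CFC.rpow_one R hR]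
    have hXY : (U * CFC.rpow R (1 - l)) * CFC.rpow R l = T := by
      rw [mul_assoc, hmul1, hT]
    have hYX : CFC.rpow R l * (U * CFC.rpow R (1 - l))
        = CFC.rpow R l * U * CFC.rpow R (1 - l) := (mul_assoc _ _ _).symm
    constructor
    · intro h
      rw [← hXY] at h
      have h2 := aps_swap _ _ hμ h
      rwa [hYX] at h2
    · intro h
      rw [← hYX] at h
      have h2 := aps_swap _ _ hμ h
      rwa [hXY] at h2
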